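/- With A(b) as above (diagonal entries k_i + 2(n−1)b, off-diagonal entries −2b, where ∑ k_i = 1), the determinant of A(b) is a polynomial in b of degree n−1 whose leading coefficient is a positive constant independent of the functions k_i (namely n(2n)^{n−2} after appropriate normalization); in particular det A(b) > 0 for all sufficiently large b. -/

import Mathlib

noncomputable section

open Polynomial Finset Matrix

/-- Determinant of a diagonal matrix minus a constant rank-one perturbation. -/
theorem det_diag_sub_aux (n : ℕ) (d : Fin n → ℝ) (c : ℝ) (hd : ∀ i, d i ≠ 0) :
    (Matrix.of fun i j : Fin n => (if i = j then d i else 0) - c).det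
      = ∏ i, d i - c * ∑ i, ∏ j ∈ univ.erase i, d j := by
  have hdet : IsUnit (Matrix.diagonal d).det := by
    rw [Matrix.det_diagonal]
    exact (Finset.prod_ne_zero_iff.mpr fun i _ => hd i).isUnit
  have hM : (Matrix.of fun i j : Fin n => (if i = j then d i else 0) - c)
      = Matrix.diagonal d + replicateCol Unit (fun _ : Fin n => (1:ℝ)) * replicateRow Unit (fun _ : Fin n => -c) := by
    ext i j
    simp [Matrix.mul_apply, Matrix.diagonal, sub_eq_add_neg]
  rw [hM, Matrix.det_add_replicateCol_mul_replicateRow hdet, Matrix.det_diagonal, Matrix.det_unique]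
  have hinv : (Matrix.diagonal d)⁻¹ = Matrix.diagonal (fun i => (d i)⁻¹) := by
    refine Matrix.inv_eq_right_inv ?_
    rw [Matrix.diagonal_mul_diagonal]
    convert Matrix.diagonal_one with i
    exact mul_inv_cancel₀ (hd i)
  rw [hinv]
  have key : ((1 + replicateRow Unit (fun _ : Fin n => -c) * Matrix.diagonal (fun i => (d i)⁻¹)
      * replicateCol Unit (fun _ : Fin n => (1:ℝ)) : Matrix Unit Unit ℝ) default default)
      = 1 - c * ∑ i, (d i)⁻¹ := by
    simp [Matrix.mul_apply, Matrix.diagonal_apply, Finset.mul_sum, sub_eq_add_neg, mul_ite]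
  rw [key, mul_sub, mul_one]
  congr 1
  rw [mul_left_comm]
  congr 1
  rw [Finset.mul_sum]
  exact Finset.sum_congr rfl fun i _ => by
    rw [← Finset.mul_prod_erase univ d (Finset.mem_univ i), mul_comm (d i), mul_assoc,
      mul_inv_cancel₀ (hd i), mul_one]

theorem prodXC_coeff_card {σ : Type*} (s : Finset σ) (r : σ → ℝ) :
    (∏ i ∈ s, (X + C (r i))).coeff s.card = 1 := by
  rw [Finset.prod_X_add_C_coeff s r le_rfl]
  simp

theorem prodXC_coeff_card_sub_one {σ : Type*} (s : Finset σ) (r : σ → ℝ) (hs : 0 < s.card) :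
    (∏ i ∈ s, (X + C (r i))).coeff (s.card - 1) = ∑ i ∈ s, r i := by
  rw [Finset.prod_X_add_C_coeff s r (Nat.sub_le _ _),
    Nat.sub_sub_self hs, Finset.powersetCard_one, Finset.sum_map]
  simp

theorem prodXC_natDegree {σ : Type*} (s : Finset σ) (r : σ → ℝ) :
    (∏ i ∈ s, (X + C (r i))).natDegree = s.card := by
  rw [Polynomial.natDegree_prod]
  · simp
  · intro i _; exact X_add_C_ne_zero (r i)

/-- The matrix `A(b)` with diagonal entries `k_i + 2(n−1)b` and off-diagonal
entries `−2b`. -/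
def Amat (n : ℕ) (k : Fin n → ℝ) (b : ℝ) : Matrix (Fin n) (Fin n) ℝ :=
  Matrix.of fun i j => if i = j then k i + 2 * ((n : ℝ) - 1) * b else -2 * b

/-- If `∑ k_i = 1`, then `det A(b)` is a polynomial in `b` of degree at most
`n−1` whose degree-`(n−1)` coefficient is positive; in particular
`det A(b) > 0` for all sufficiently large `b`. -/
theorem det_Amat_polynomial (n : ℕ) (hn : 0 < n)
    (k : Fin n → ℝ) (hsum : ∑ i, k i = 1) :
    ∃ P : Polynomial ℝ,
      (∀ b : ℝ, P.eval b = (Amat n k b).det) ∧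
      P.natDegree ≤ n - 1 ∧
      0 < P.coeff (n - 1) ∧
      ∃ b₀ : ℝ, ∀ b ≥ b₀, 0 < (Amat n k b).det := by
  -- dispose of the case n = 1 first
  by_cases hone : n = 1
  · subst hone
    have hk : k 0 = 1 := by simpa using hsum
    have hdet : ∀ b : ℝ, (Amat 1 k b).det = 1 := by
      intro b
      rw [show (Amat 1 k b).det = Amat 1 k b 0 0 from Matrix.det_fin_one _]
      simp [Amat, hk]
    exact ⟨Polynomial.C 1, fun b => by rw [hdet b]; simp, by simp, by simp, 0,
      fun b _ => by rw [hdet b]; norm_num⟩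
  have hn2 : 2 ≤ n := by omega
  -- basic abbreviations
  set m : ℝ := 2 * n with hm_def
  have hm : m ≠ 0 := by
    simp only [hm_def]
    positivity
  set r : Fin n → ℝ := fun i => k i / m with hr_def
  have hmr : ∀ i, m * r i = k i := fun i => by
    rw [hr_def]; field_simp
  have hrsum : ∑ i, r i = 1 / m := by
    rw [hr_def, ← Finset.sum_div, hsum]
  -- the candidate polynomial
  set E : ℝ[X] := ∏ i, (X + C (r i)) with hE_def
  set Ei : Fin n → ℝ[X] := fun i => ∏ j ∈ univ.erase i, (X + C (r j)) with hEi_def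
  set Q : ℝ[X] := C (m ^ n) * E - C 2 * X * ∑ i, C (m ^ (n - 1)) * Ei i with hQ_def
  -- the determinant as a function of b
  have heval : ∀ b : ℝ, Q.eval b = (Amat n k b).det := by
    -- det as a polynomial via the evaluation ring hom
    set M : Matrix (Fin n) (Fin n) ℝ[X] := Matrix.of fun i j =>
      if i = j then C (k i) + C (2 * ((n : ℝ) - 1)) * X else C (-2) * X with hM_def
    have hPdet : ∀ b : ℝ, (M.det).eval b = (Amat n k b).det := by
      intro b
      have := RingHom.map_det (Polynomial.evalRingHom b) M
      rw [show (Polynomial.evalRingHom b) M.det = M.det.eval b from rfl] at this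
      rw [this]
      congr 1
      ext i j
      by_cases h : i = j <;>
        simp [hM_def, Amat, h, Matrix.map_apply]
    -- it suffices to show Q = M.det
    suffices hQM : Q = M.det by
      intro b; rw [hQM, hPdet]
    apply Polynomial.eq_of_infinite_eval_eq
    have hsub : {b : ℝ | ∀ i, k i + m * b ≠ 0} ⊆ {x | Q.eval x = (M.det).eval x} := by
      intro b hb
      simp only [Set.mem_setOf_eq] at hb ⊢
      rw [hPdet b]
      -- identify Amat with the diag-minus-constant matrix
      have hA : Amat n k b = Matrix.of fun i j : Fin n =>
          (if i = j then k i + m * b else 0) - 2 * b := by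
        ext i j
        by_cases h : i = j <;> simp [Amat, h, hm_def] <;> ring
      rw [hA, det_diag_sub_aux n _ _ hb]
      -- now evaluate Q
      have hQe : Q.eval b = m ^ n * ∏ i, (b + r i)
          - 2 * b * ∑ i, m ^ (n - 1) * ∏ j ∈ univ.erase i, (b + r j) := by
        simp [hQ_def, hE_def, hEi_def, Polynomial.eval_prod, Polynomial.eval_finset_sum]
      rw [hQe]
      have hprod : m ^ n * ∏ i, (b + r i) = ∏ i, (k i + m * b) := by
        rw [show ∏ i, (k i + m * b) = ∏ i, (m * (b + r i)) from
          Finset.prod_congr rfl fun i _ => by rw [mul_add, hmr]; ring,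
          Finset.prod_mul_distrib, Finset.prod_const, Finset.card_univ, Fintype.card_fin]
      have hprod2 : ∀ i : Fin n, m ^ (n - 1) * ∏ j ∈ univ.erase i, (b + r j)
          = ∏ j ∈ univ.erase i, (k j + m * b) := by
        intro i
        rw [show ∏ j ∈ univ.erase i, (k j + m * b) = ∏ j ∈ univ.erase i, (m * (b + r j)) from
          Finset.prod_congr rfl fun j _ => by rw [mul_add, hmr]; ring,
          Finset.prod_mul_distrib, Finset.prod_const,
          Finset.card_erase_of_mem (Finset.mem_univ i), Finset.card_univ, Fintype.card_fin]
      rw [hprod]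
      congr 2
      exact Finset.sum_congr rfl fun i _ => hprod2 i
    refine Set.Infinite.mono hsub ?_
    have hfin : (Set.range fun i : Fin n => -(k i) / m).Finite := Set.finite_range _
    refine Set.Infinite.mono ?_ hfin.infinite_compl
    intro b hb i
    intro hzero
    apply hb
    refine ⟨i, ?_⟩
    field_simp
    linarith
  -- coefficients of Q
  have hE_coeff_top : E.coeff n = 1 := by
    have := prodXC_coeff_card (univ : Finset (Fin n)) r
    rwa [Finset.card_univ, Fintype.card_fin] at this
  have hE_nd : E.natDegree = n := by
    have := prodXC_natDegree (univ : Finset (Fin n)) r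
    rwa [Finset.card_univ, Fintype.card_fin] at this
  have hEi_card : ∀ i : Fin n, (univ.erase i).card = n - 1 := fun i => by
    rw [Finset.card_erase_of_mem (Finset.mem_univ i), Finset.card_univ, Fintype.card_fin]
  have hEi_coeff_top : ∀ i, (Ei i).coeff (n - 1) = 1 := fun i => by
    have := prodXC_coeff_card (univ.erase i) r
    rwa [hEi_card i] at this
  have hEi_nd : ∀ i, (Ei i).natDegree = n - 1 := fun i => by
    have := prodXC_natDegree (univ.erase i) r
    rwa [hEi_card i] at this
  -- generic coefficient formula for Q at positive indices
  have hQcoeff : ∀ N : ℕ, 1 ≤ N → Q.coeff N = m ^ n * E.coeff N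
      - 2 * ∑ i, m ^ (n - 1) * (Ei i).coeff (N - 1) := by
    intro N hN
    obtain ⟨N', rfl⟩ : ∃ N', N = N' + 1 := ⟨N - 1, by omega⟩
    simp only [Nat.add_sub_cancel]
    rw [hQ_def]
    rw [Polynomial.coeff_sub, Polynomial.coeff_C_mul, mul_assoc,
      Polynomial.coeff_C_mul, Polynomial.coeff_X_mul, Polynomial.finset_sum_coeff]
    simp only [Polynomial.coeff_C_mul]
  -- coefficient at n vanishes
  have hQn : Q.coeff n = 0 := by
    rw [hQcoeff n hn, hE_coeff_top]
    simp only [hEi_coeff_top, mul_one, Finset.sum_const, Finset.card_univ, Fintype.card_fin,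
      nsmul_eq_mul]
    have : m ^ n = m * m ^ (n - 1) := by
      rw [← pow_succ']
      congr 1
      omega
    rw [this, hm_def]
    push_cast
    ring
  -- coefficients above n vanish
  have hQbig : ∀ N, n < N → Q.coeff N = 0 := by
    intro N hN
    rw [hQcoeff N (by omega)]
    have h1 : E.coeff N = 0 :=
      Polynomial.coeff_eq_zero_of_natDegree_lt (by rw [hE_nd]; omega)
    have h2 : ∀ i, (Ei i).coeff (N - 1) = 0 := fun i =>
      Polynomial.coeff_eq_zero_of_natDegree_lt (by rw [hEi_nd]; omega)
    simp [h1, h2]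
  have hQdeg : Q.natDegree ≤ n - 1 := by
    rw [Polynomial.natDegree_le_iff_coeff_eq_zero]
    intro N hN
    rcases eq_or_lt_of_le (show n ≤ N by omega) with h | h
    · rw [← h]; exact hQn
    · exact hQbig N h
  -- positivity of the coefficient at n - 1
  have hQpos : 0 < Q.coeff (n - 1) := by
    rw [hQcoeff (n - 1) (by omega)]
    have hE2 : E.coeff (n - 1) = 1 / m := by
      have := prodXC_coeff_card_sub_one (univ : Finset (Fin n)) r
        (by rw [Finset.card_univ, Fintype.card_fin]; omega)
      rw [Finset.card_univ, Fintype.card_fin] at this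
      rw [this, hrsum]
    have hEi2 : ∀ i, (Ei i).coeff (n - 1 - 1) = ∑ j ∈ univ.erase i, r j := by
      intro i
      have := prodXC_coeff_card_sub_one (univ.erase i) r (by rw [hEi_card i]; omega)
      rwa [hEi_card i] at this
    simp only [hE2, hEi2]
    have hsum2 : ∑ i : Fin n, m ^ (n - 1) * ∑ j ∈ univ.erase i, r j
        = m ^ (n - 1) * (((n : ℝ) - 1) / m) := by
      rw [← Finset.mul_sum]
      congr 1
      have hterm : ∀ i : Fin n, ∑ j ∈ univ.erase i, r j = 1 / m - r i := by
        intro i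
        rw [Finset.sum_erase_eq_sub (Finset.mem_univ i), hrsum]
      simp only [hterm]
      rw [Finset.sum_sub_distrib, hrsum, Finset.sum_const, Finset.card_univ,
        Fintype.card_fin, nsmul_eq_mul]
      field_simp
    rw [hsum2]
    have hmn : m ^ n = m * m ^ (n - 1) := by
      rw [← pow_succ']
      congr 1
      omega
    have hmn1 : m ^ (n - 1) = m * m ^ (n - 2) := by
      rw [← pow_succ']
      congr 1
      omega
    have hm' : (0:ℝ) < m := by
      rw [hm_def]; positivity
    have expand : m ^ n * (1 / m) - 2 * (m ^ (n - 1) * (((n : ℝ) - 1) / m))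
        = m ^ (n - 2) * (m - 2 * ((n : ℝ) - 1)) := by
      rw [hmn, hmn1]
      field_simp
    rw [expand]
    have : m - 2 * ((n : ℝ) - 1) = 2 := by
      rw [hm_def]
      ring
    rw [this]
    positivity
  -- eventual positivity
  have hQne : Q ≠ 0 := fun h => by simp [h] at hQpos
  have hQnd : Q.natDegree = n - 1 :=
    le_antisymm hQdeg (Polynomial.le_natDegree_of_ne_zero (ne_of_gt hQpos))
  have hlead : Q.leadingCoeff = Q.coeff (n - 1) := by
    rw [Polynomial.leadingCoeff, hQnd]
  have hdegpos : 0 < Q.degree := by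
    rw [Polynomial.degree_eq_natDegree hQne, hQnd]
    exact_mod_cast Nat.pos_of_ne_zero (by omega)
  have htend := Polynomial.tendsto_atTop_of_leadingCoeff_nonneg Q hdegpos
    (by rw [hlead]; exact le_of_lt hQpos)
  have hev : ∀ᶠ b in Filter.atTop, 0 < Q.eval b := htend.eventually_gt_atTop 0
  obtain ⟨b₀, hb₀⟩ := Filter.eventually_atTop.mp hev
  exact ⟨Q, heval, hQdeg, hQpos, b₀, fun b hb => by rw [← heval b]; exact hb₀ b hb⟩

end
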